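/- Let (Ω, 𝒜) be a measurable space and let K : Ω → 𝒦′(ℂⁿ) be a random compact set. Then the rationally convex hull of K is a random compact set: there exists a measurable map H : Ω → 𝒦′(ℂⁿ) such that for every ω ∈ Ω the set H(ω) equals the rationally convex hull R-hull(K(ω)) of K(ω). -/

import Mathlib

open TopologicalSpace MvPolynomial

namespace RHullAux

open Metric Set Topology


variable {n : ℕ}

/-- The rationally convex hull, as a set. -/
def hullSet (A : Set (Fin n → ℂ)) : Set (Fin n → ℂ) :=
  {z : Fin n → ℂ | ∀ p q : MvPolynomial (Fin n) ℂ,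
    (∀ x ∈ A, eval x q ≠ 0) →
    ‖eval z p‖ ≤ ‖eval z q‖ *
      ⨆ x : A, ‖eval (x : Fin n → ℂ) p / eval (x : Fin n → ℂ) q‖}

lemma bdd_hull (A : Set (Fin n → ℂ)) (hA : IsCompact A) (p q : MvPolynomial (Fin n) ℂ)
    (hq : ∀ x ∈ A, eval x q ≠ 0) :
    BddAbove (Set.range fun x : A => ‖eval (x : Fin n → ℂ) p / eval (x : Fin n → ℂ) q‖) := by
  have h := hA.bddAbove_image
    ((((continuous_eval p).continuousOn.div (continuous_eval q).continuousOn hq).norm))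
  rwa [Set.image_eq_range] at h

lemma subset_hullSet (A : Set (Fin n → ℂ)) (hA : IsCompact A) : A ⊆ hullSet A := by
  intro z hz p q hq
  have hqz := hq z hz
  have hq' : ‖eval z q‖ ≠ 0 := norm_ne_zero_iff.2 hqz
  have h1 : ‖eval z p‖ = ‖eval z q‖ * ‖eval z p / eval z q‖ := by
    rw [norm_div, mul_comm, div_mul_cancel₀ _ hq']
  rw [h1]
  exact mul_le_mul_of_nonneg_left (le_ciSup (bdd_hull A hA p q hq) ⟨z, hz⟩) (norm_nonneg _)

lemma hullSet_nonvanishing {A : Set (Fin n → ℂ)} {z : Fin n → ℂ} (hz : z ∈ hullSet A)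
    {q : MvPolynomial (Fin n) ℂ} (hq : ∀ x ∈ A, eval x q ≠ 0) : eval z q ≠ 0 := by
  intro h0
  have := hz 1 q hq
  simp [h0] at this
  linarith

lemma mem_hullSet_of {A : Set (Fin n → ℂ)} (hA : IsCompact A) {z : Fin n → ℂ}
    (h : ∀ q : MvPolynomial (Fin n) ℂ, (∀ x ∈ A, eval x q ≠ 0) → eval z q ≠ 0) :
    z ∈ hullSet A := by
  intro p q hq
  have hqz : eval z q ≠ 0 := h q hq
  by_cases hx : ∃ x ∈ A, eval x (p * C (eval z q) - q * C (eval z p)) = 0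
  · obtain ⟨x, hxA, hx0⟩ := hx
    have hxq := hq x hxA
    have heq : eval x p * eval z q = eval x q * eval z p := by
      rw [map_sub, map_mul, map_mul, eval_C, eval_C, sub_eq_zero] at hx0
      exact hx0
    have h2 : eval z p = eval x p / eval x q * eval z q := by
      rw [div_mul_eq_mul_div, eq_comm, div_eq_iff hxq]
      linear_combination heq
    calc ‖eval z p‖ = ‖eval (x : Fin n → ℂ) p / eval (x : Fin n → ℂ) q‖ * ‖eval z q‖ := by
          rw [h2, norm_mul]
      _ ≤ (⨆ x : A, ‖eval (x : Fin n → ℂ) p / eval (x : Fin n → ℂ) q‖) * ‖eval z q‖ :=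
          mul_le_mul_of_nonneg_right (le_ciSup (bdd_hull A hA p q hq) ⟨x, hxA⟩) (norm_nonneg _)
      _ = _ := mul_comm _ _
  · push_neg at hx
    exfalso
    apply h _ hx
    rw [map_sub, map_mul, map_mul, eval_C, eval_C, sub_eq_zero, mul_comm]

lemma isClosed_hullSet (A : Set (Fin n → ℂ)) : IsClosed (hullSet A) := by
  have h1 : hullSet A = ⋂ (p : MvPolynomial (Fin n) ℂ) (q : MvPolynomial (Fin n) ℂ),
      {z : Fin n → ℂ | (∀ x ∈ A, eval x q ≠ 0) →
        ‖eval z p‖ ≤ ‖eval z q‖ *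
          ⨆ x : A, ‖eval (x : Fin n → ℂ) p / eval (x : Fin n → ℂ) q‖} := by
    ext z
    simp only [hullSet, Set.mem_setOf_eq, Set.mem_iInter]
  rw [h1]
  refine isClosed_iInter fun p => isClosed_iInter fun q => ?_
  by_cases hq : ∀ x ∈ A, eval x q ≠ 0
  · have h2 : {z : Fin n → ℂ | (∀ x ∈ A, eval x q ≠ 0) →
        ‖eval z p‖ ≤ ‖eval z q‖ *
          ⨆ x : A, ‖eval (x : Fin n → ℂ) p / eval (x : Fin n → ℂ) q‖} =
        {z : Fin n → ℂ | ‖eval z p‖ ≤ ‖eval z q‖ *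
          ⨆ x : A, ‖eval (x : Fin n → ℂ) p / eval (x : Fin n → ℂ) q‖} := by
      ext z; simp only [Set.mem_setOf_eq]; exact ⟨fun h => h hq, fun h _ => h⟩
    rw [h2]
    exact isClosed_le (continuous_eval p).norm ((continuous_eval q).norm.mul continuous_const)
  · have h2 : {z : Fin n → ℂ | (∀ x ∈ A, eval x q ≠ 0) →
        ‖eval z p‖ ≤ ‖eval z q‖ *
          ⨆ x : A, ‖eval (x : Fin n → ℂ) p / eval (x : Fin n → ℂ) q‖} = Set.univ := by
      ext z; simp only [Set.mem_setOf_eq, Set.mem_univ, iff_true]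
      exact fun h => absurd h hq
    rw [h2]
    exact isClosed_univ

lemma isCompact_hullSet (A : Set (Fin n → ℂ)) (hA : IsCompact A) : IsCompact (hullSet A) := by
  refine isCompact_of_isClosed_isBounded (isClosed_hullSet A) ?_
  rw [isBounded_iff_forall_norm_le]
  set c : Fin n → ℝ := fun i => ⨆ x : A, ‖eval (x : Fin n → ℂ) (X i) / eval (x : Fin n → ℂ) 1‖
  refine ⟨∑ i, max (c i) 0, fun z hz => ?_⟩
  have hC0 : (0:ℝ) ≤ ∑ i, max (c i) 0 :=
    Finset.sum_nonneg fun i _ => le_max_right _ _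
  rw [pi_norm_le_iff_of_nonneg hC0]
  intro i
  have h := hz (X i) 1 (by intro x hx; simp)
  have e1 : eval z (X i) = z i := eval_X _
  have e2 : (eval z (1 : MvPolynomial (Fin n) ℂ)) = 1 := map_one _
  rw [e1, e2, norm_one, one_mul] at h
  refine h.trans ?_
  calc c i ≤ max (c i) 0 := le_max_left _ _
    _ ≤ ∑ j, max (c j) 0 :=
        Finset.single_le_sum (fun j _ => le_max_right (c j) 0) (Finset.mem_univ i)

lemma hullSet_mono {A B : Set (Fin n → ℂ)} (hB : IsCompact B) (hne : A.Nonempty)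
    (hAB : A ⊆ B) : hullSet A ⊆ hullSet B := by
  intro z hz p q hq
  have hqA : ∀ x ∈ A, eval x q ≠ 0 := fun x hx => hq x (hAB hx)
  refine (hz p q hqA).trans (mul_le_mul_of_nonneg_left ?_ (norm_nonneg _))
  haveI : Nonempty A := hne.to_subtype
  exact ciSup_le fun x => le_ciSup (bdd_hull B hB p q hq) ⟨(x : Fin n → ℂ), hAB x.2⟩

/-- The rationally convex hull as a nonempty compact set. -/
def hullNC (A : NonemptyCompacts (Fin n → ℂ)) : NonemptyCompacts (Fin n → ℂ) :=
  ⟨⟨hullSet (A : Set (Fin n → ℂ)), isCompact_hullSet _ A.isCompact⟩,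
    A.nonempty.mono (subset_hullSet _ A.isCompact)⟩

lemma coe_hullNC (A : NonemptyCompacts (Fin n → ℂ)) :
    (hullNC A : Set (Fin n → ℂ)) = hullSet (A : Set (Fin n → ℂ)) := rfl


/-- radius used at stage `m` -/
noncomputable def r (m : ℕ) : ℝ := 2 / 2 ^ m

lemma r_pos (m : ℕ) : 0 < r m := by unfold r; positivity

/-- dyadic grid points -/
noncomputable def gridPt (m : ℕ) (g : Fin n → ℤ × ℤ) : Fin n → ℂ :=
  fun i => Complex.mk ((g i).1 / 2 ^ m) ((g i).2 / 2 ^ m)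

lemma gridPt_re (m : ℕ) (g : Fin n → ℤ × ℤ) (i : Fin n) :
    (gridPt m g i).re = (g i).1 / 2 ^ m := rfl

lemma gridPt_im (m : ℕ) (g : Fin n → ℤ × ℤ) (i : Fin n) :
    (gridPt m g i).im = (g i).2 / 2 ^ m := rfl

lemma abs_sub_floor_div (m : ℕ) (a : ℝ) : |a - ⌊a * 2 ^ m⌋ / 2 ^ m| ≤ 1 / 2 ^ m := by
  have hP : (0:ℝ) < 2 ^ m := by positivity
  have h1 : (⌊a * 2 ^ m⌋ : ℝ) ≤ a * 2 ^ m := Int.floor_le _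
  have h2 : a * 2 ^ m - 1 ≤ (⌊a * 2 ^ m⌋ : ℝ) := (Int.sub_one_lt_floor _).le
  have e : a - ⌊a * 2 ^ m⌋ / 2 ^ m = (a * 2 ^ m - ⌊a * 2 ^ m⌋) / 2 ^ m := by
    field_simp
  rw [e, abs_div, abs_of_pos hP]
  gcongr
  rw [abs_le]
  constructor <;> linarith

lemma exists_grid_close (m : ℕ) (x : Fin n → ℂ) :
    ∃ g : Fin n → ℤ × ℤ, dist x (gridPt m g) ≤ r m := by
  refine ⟨fun i => (⌊(x i).re * 2 ^ m⌋, ⌊(x i).im * 2 ^ m⌋), ?_⟩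
  rw [dist_pi_le_iff (r_pos m).le]
  intro i
  rw [Complex.dist_eq]
  refine (Complex.norm_le_abs_re_add_abs_im _).trans ?_
  rw [Complex.sub_re, Complex.sub_im, gridPt_re, gridPt_im]
  have h1 := abs_sub_floor_div m (x i).re
  have h2 := abs_sub_floor_div m (x i).im
  have : r m = 1 / 2 ^ m + 1 / 2 ^ m := by unfold r; ring
  rw [this]
  exact add_le_add h1 h2

/-- indices of grid balls that meet `A` -/
def gridSet (m : ℕ) (A : Set (Fin n → ℂ)) : Set (Fin n → ℤ × ℤ) :=
  {g | (closedBall (gridPt m g) (r m) ∩ A).Nonempty}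

lemma gridSet_finite (m : ℕ) {A : Set (Fin n → ℂ)} (hA : Bornology.IsBounded A) :
    (gridSet m A).Finite := by
  obtain ⟨R, hR⟩ := isBounded_iff_forall_norm_le.1 hA
  set M : ℤ := ⌈(R + r m) * 2 ^ m⌉ with hM
  refine Set.Finite.subset
    (Set.Finite.pi fun i : Fin n => (Set.finite_Icc (-M) M).prod (Set.finite_Icc (-M) M)) ?_
  intro g hg
  obtain ⟨x, hxball, hxA⟩ := hg
  have hP : (0:ℝ) < 2 ^ m := by positivity
  have hnorm : ‖gridPt m g‖ ≤ R + r m := by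
    have h1 : dist (gridPt m g) 0 ≤ dist (gridPt m g) x + dist x 0 := dist_triangle _ _ _
    rw [dist_zero_right, dist_zero_right] at h1
    have h2 : dist (gridPt m g) x ≤ r m := by
      rw [dist_comm]; exact mem_closedBall.1 hxball
    have h3 := hR x hxA
    linarith
  rw [Set.mem_univ_pi]
  intro i
  have h1 : ‖gridPt m g i‖ ≤ R + r m := (norm_le_pi_norm _ i).trans hnorm
  have key : ∀ a : ℤ, |(a:ℝ)| / 2 ^ m ≤ R + r m → a ∈ Set.Icc (-M) M := by
    intro a ha
    have h2 : |(a:ℝ)| ≤ (R + r m) * 2 ^ m := by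
      rw [div_le_iff₀ hP] at ha; exact ha
    have h3 : ((|a| : ℤ) : ℝ) ≤ (M : ℝ) := by
      rw [Int.cast_abs]
      exact h2.trans (Int.le_ceil _)
    have h4 : |a| ≤ M := Int.cast_le.1 h3
    rw [Set.mem_Icc]
    exact ⟨neg_le_of_abs_le h4, le_of_abs_le h4⟩
  constructor
  · refine key _ ?_
    have := (Complex.abs_re_le_norm (gridPt m g i)).trans
      h1
    rw [gridPt_re] at this
    rwa [abs_div, abs_of_pos hP] at this
  · refine key _ ?_
    have := (Complex.abs_im_le_norm (gridPt m g i)).trans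
      h1
    rw [gridPt_im] at this
    rwa [abs_div, abs_of_pos hP] at this


/-- finite union of grid balls covering `A` -/
noncomputable def approxSet (m : ℕ) (A : Set (Fin n → ℂ)) : Set (Fin n → ℂ) :=
  ⋃ g ∈ gridSet m A, closedBall (gridPt m g) (r m)

lemma subset_approxSet (m : ℕ) (A : Set (Fin n → ℂ)) : A ⊆ approxSet m A := by
  intro x hx
  obtain ⟨g, hg⟩ := exists_grid_close m x
  have hxg : x ∈ closedBall (gridPt m g) (r m) := mem_closedBall.2 hg
  exact Set.mem_biUnion (⟨x, hxg, hx⟩ : g ∈ gridSet m A) hxg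

lemma approxSet_subset_thickening {m : ℕ} {A : Set (Fin n → ℂ)} {δ : ℝ}
    (hδ : 2 * r m < δ) : approxSet m A ⊆ thickening δ A := by
  intro y hy
  obtain ⟨g, hg, hyg⟩ := Set.mem_iUnion₂.1 hy
  obtain ⟨x, hxball, hxA⟩ := hg
  rw [mem_thickening_iff]
  refine ⟨x, hxA, ?_⟩
  have h1 : dist y x ≤ dist y (gridPt m g) + dist (gridPt m g) x := dist_triangle _ _ _
  have h2 : dist y (gridPt m g) ≤ r m := mem_closedBall.1 hyg
  have h3 : dist (gridPt m g) x ≤ r m := by rw [dist_comm]; exact mem_closedBall.1 hxball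
  linarith

lemma isCompact_approxSet (m : ℕ) {A : Set (Fin n → ℂ)} (hA : IsCompact A) :
    IsCompact (approxSet m A) :=
  (gridSet_finite m hA.isBounded).isCompact_biUnion fun _ _ => isCompact_closedBall _ _

/-- intersection of the first `m+1` approximations -/
noncomputable def nestSet (m : ℕ) (A : Set (Fin n → ℂ)) : Set (Fin n → ℂ) :=
  ⋂ j ∈ Finset.range (m + 1), approxSet j A

lemma subset_nestSet (m : ℕ) (A : Set (Fin n → ℂ)) : A ⊆ nestSet m A :=
  Set.subset_iInter₂ fun j _ => subset_approxSet j A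

lemma nestSet_subset_approx (m : ℕ) (A : Set (Fin n → ℂ)) : nestSet m A ⊆ approxSet m A :=
  Set.biInter_subset_of_mem (Finset.self_mem_range_succ m)

lemma nestSet_antitone (m : ℕ) (A : Set (Fin n → ℂ)) : nestSet (m + 1) A ⊆ nestSet m A := by
  refine Set.subset_iInter₂ fun j hj => ?_
  exact Set.biInter_subset_of_mem (Finset.mem_range_succ_iff.2
    ((Finset.mem_range_succ_iff.1 hj).trans (Nat.le_succ m)))

lemma isCompact_nestSet (m : ℕ) {A : Set (Fin n → ℂ)} (hA : IsCompact A) :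
    IsCompact (nestSet m A) := by
  exact (isCompact_approxSet 0 hA).of_isClosed_subset
    (isClosed_biInter fun j _ => (isCompact_approxSet j hA).isClosed)
    (Set.biInter_subset_of_mem (Finset.mem_range.2 (Nat.succ_pos m)))

/-- the approximating nonempty compact set -/
noncomputable def KmNC (m : ℕ) (A : NonemptyCompacts (Fin n → ℂ)) :
    NonemptyCompacts (Fin n → ℂ) :=
  ⟨⟨nestSet m (A : Set (Fin n → ℂ)), isCompact_nestSet m A.isCompact⟩,
    A.nonempty.mono (subset_nestSet m _)⟩


open Filter in
/-- A decreasing sequence of nonempty compacts whose intersection is `D` converges to `D`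
in the Hausdorff metric. -/
lemma tendsto_nonemptyCompacts_of_antitone {α : Type*} [MetricSpace α]
    {C : ℕ → NonemptyCompacts α} {D : NonemptyCompacts α}
    (hstep : ∀ m, (C (m + 1) : Set α) ⊆ C m)
    (hD : ∀ m, (D : Set α) ⊆ C m)
    (hint : (⋂ m, (C m : Set α)) ⊆ (D : Set α)) :
    Tendsto C atTop (𝓝 D) := by
  rw [Metric.tendsto_atTop]
  intro ε hε
  have hanti : Antitone fun m => (C m : Set α) := antitone_nat_of_succ_le hstep
  set U : Set α := thickening (ε / 2) (D : Set α) with hU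
  have hUopen : IsOpen U := isOpen_thickening
  have hex : ∃ N, (C N : Set α) ⊆ U := by
    by_contra hcon
    push_neg at hcon
    have hne : ∀ N, ((C N : Set α) \ U).Nonempty := fun N => by
      obtain ⟨x, hx1, hx2⟩ := Set.not_subset.1 (hcon N)
      exact ⟨x, hx1, hx2⟩
    have hcompact0 : IsCompact ((C 0 : Set α) \ U) := (C 0).isCompact.diff hUopen
    have hclosed : ∀ N, IsClosed ((C N : Set α) \ U) := fun N =>
      (C N).isCompact.isClosed.sdiff hUopen
    have hstep' : ∀ N, ((C (N + 1) : Set α) \ U) ⊆ ((C N : Set α) \ U) := fun N =>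
      Set.diff_subset_diff_left (hstep N)
    obtain ⟨x, hx⟩ := IsCompact.nonempty_iInter_of_sequence_nonempty_isCompact_isClosed
      (fun N => (C N : Set α) \ U) hstep' hne hcompact0 hclosed
    rw [Set.mem_iInter] at hx
    have hxD : x ∈ (D : Set α) := hint (Set.mem_iInter.2 fun N => (hx N).1)
    exact (hx 0).2 (self_subset_thickening (by linarith) (D : Set α) hxD)
  obtain ⟨N, hN⟩ := hex
  refine ⟨N, fun m hm => ?_⟩
  have hCm : (C m : Set α) ⊆ U := (hanti hm).trans hN
  rw [NonemptyCompacts.dist_eq]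
  have h1 : Metric.hausdorffDist (C m : Set α) (D : Set α) ≤ ε / 2 := by
    refine Metric.hausdorffDist_le_of_mem_dist (by linarith) ?_ ?_
    · intro x hx
      obtain ⟨y, hy, hxy⟩ := mem_thickening_iff.1 (hCm hx)
      exact ⟨y, hy, hxy.le⟩
    · intro x hx
      exact ⟨x, hD m hx, by rw [dist_self]; linarith⟩
  linarith

lemma exists_two_r_lt {δ : ℝ} (hδ : 0 < δ) : ∃ m : ℕ, 2 * r m < δ := by
  obtain ⟨m, hm⟩ := exists_pow_lt_of_lt_one (show (0:ℝ) < δ / 4 by linarith)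
    (show (1:ℝ) / 2 < 1 by norm_num)
  refine ⟨m, ?_⟩
  have h1 : ((1:ℝ) / 2) ^ m = 1 / 2 ^ m := by rw [div_pow, one_pow]
  have hP : (0:ℝ) < 2 ^ m := by positivity
  rw [h1] at hm
  have : r m = 2 * (1 / 2 ^ m) := by unfold r; ring
  rw [this]
  linarith

lemma iInter_hullSet_nestSet (A : NonemptyCompacts (Fin n → ℂ)) :
    (⋂ m, hullSet (nestSet m (A : Set (Fin n → ℂ)))) ⊆ hullSet (A : Set (Fin n → ℂ)) := by
  intro z hz
  rw [Set.mem_iInter] at hz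
  refine mem_hullSet_of A.isCompact fun q hq => ?_
  have hUopen : IsOpen {x : Fin n → ℂ | eval x q ≠ 0} :=
    isOpen_compl_singleton.preimage (continuous_eval q)
  have hAU : (A : Set (Fin n → ℂ)) ⊆ {x | eval x q ≠ 0} := hq
  obtain ⟨δ, hδpos, hδ⟩ := A.isCompact.exists_thickening_subset_open hUopen hAU
  obtain ⟨m, hm⟩ := exists_two_r_lt hδpos
  have hsub : nestSet m (A : Set (Fin n → ℂ)) ⊆ {x | eval x q ≠ 0} :=
    (nestSet_subset_approx m _).trans ((approxSet_subset_thickening hm).trans hδ)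
  exact hullSet_nonvanishing (hz m) fun x hx => hsub hx

lemma tendsto_hullNC_KmNC (A : NonemptyCompacts (Fin n → ℂ)) :
    Filter.Tendsto (fun m => hullNC (KmNC m A)) Filter.atTop (𝓝 (hullNC A)) := by
  refine tendsto_nonemptyCompacts_of_antitone (fun m => ?_) (fun m => ?_) ?_
  · exact hullSet_mono (isCompact_nestSet m A.isCompact)
      (A.nonempty.mono (subset_nestSet _ _)) (nestSet_antitone m _)
  · exact hullSet_mono (isCompact_nestSet m A.isCompact) A.nonempty (subset_nestSet m _)
  · exact iInter_hullSet_nestSet A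


lemma isClosed_inter_nonempty {α : Type*} [MetricSpace α] {C : Set α} (hC : IsClosed C) :
    IsClosed {B : NonemptyCompacts α | (C ∩ (B : Set α)).Nonempty} := by
  rw [← isOpen_compl_iff, Metric.isOpen_iff]
  intro B hB
  have hsub : (B : Set α) ⊆ Cᶜ := fun x hx hxC => hB ⟨x, hxC, hx⟩
  obtain ⟨δ, hδpos, hδ⟩ := B.isCompact.exists_thickening_subset_open hC.isOpen_compl hsub
  refine ⟨δ, hδpos, fun B' hB' => ?_⟩
  rw [mem_ball] at hB'
  simp only [Set.mem_compl_iff, Set.mem_setOf_eq]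
  rintro ⟨x, hxC, hxB'⟩
  have hfin := Metric.hausdorffEdist_ne_top_of_nonempty_of_bounded B'.nonempty B.nonempty
    B'.isCompact.isBounded B.isCompact.isBounded
  have hdist : Metric.hausdorffDist (B' : Set α) (B : Set α) < δ := by
    rw [← NonemptyCompacts.dist_eq]; exact hB'
  obtain ⟨y, hy, hxy⟩ := Metric.exists_dist_lt_of_hausdorffDist_lt hxB' hdist hfin
  exact hδ (mem_thickening_iff.2 ⟨y, hy, hxy⟩) hxC

lemma measurable_of_countable_factor {Ω γ β : Type*} [MeasurableSpace Ω] [MeasurableSpace β]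
    {H : Ω → β} {g : Ω → γ} (hrange : (Set.range g).Countable)
    (hfib : ∀ v : γ, MeasurableSet (g ⁻¹' {v}))
    (hcongr : ∀ ω ω', g ω = g ω' → H ω = H ω') : Measurable H := by
  intro T _
  have heq : H ⁻¹' T = ⋃ v ∈ {v ∈ Set.range g | ∃ ω, g ω = v ∧ H ω ∈ T}, g ⁻¹' {v} := by
    ext ω
    simp only [Set.mem_preimage, Set.mem_iUnion, Set.mem_setOf_eq, Set.mem_singleton_iff]
    constructor
    · intro h
      exact ⟨g ω, ⟨⟨ω, rfl⟩, ω, rfl, h⟩, rfl⟩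
    · rintro ⟨v, ⟨-, ω', hgω', hHω'⟩, hv⟩
      have := hcongr ω' ω (hgω'.trans hv.symm)
      rwa [← this]
  rw [heq]
  exact MeasurableSet.biUnion (hrange.mono (Set.sep_subset _ _)) fun v _ => hfib v

variable [MeasurableSpace (NonemptyCompacts (Fin n → ℂ))]
  [BorelSpace (NonemptyCompacts (Fin n → ℂ))]

lemma measurable_hull_approx {Ω : Type*} [MeasurableSpace Ω] (m : ℕ)
    {K : Ω → NonemptyCompacts (Fin n → ℂ)} (hK : Measurable K) :
    Measurable fun ω => hullNC (KmNC m (K ω)) := by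
  set g : Ω → (Fin (m + 1) → Set (Fin n → ℤ × ℤ)) :=
    fun ω j => gridSet (j : ℕ) ((K ω : Set (Fin n → ℂ))) with hg
  have hrange : (Set.range g).Countable := by
    refine Set.Countable.mono ?_
      (Set.countable_univ_pi fun _ => Set.Countable.setOf_finite)
    rintro v ⟨ω, rfl⟩
    rw [Set.mem_univ_pi]
    exact fun j => gridSet_finite _ (K ω).isCompact.isBounded
  have hfib : ∀ v, MeasurableSet (g ⁻¹' {v}) := by
    intro v
    have heq : g ⁻¹' {v} = ⋂ (j : Fin (m + 1)) (gp : Fin n → ℤ × ℤ),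
        {ω | gp ∈ gridSet (j : ℕ) ((K ω : Set (Fin n → ℂ))) ↔ gp ∈ v j} := by
      ext ω
      simp only [Set.mem_preimage, Set.mem_singleton_iff, funext_iff, Set.ext_iff,
        Set.mem_iInter, Set.mem_setOf_eq, hg]
    rw [heq]
    refine MeasurableSet.iInter fun j => MeasurableSet.iInter fun gp => ?_
    have hmeas : MeasurableSet {B : NonemptyCompacts (Fin n → ℂ) |
        (closedBall (gridPt (j : ℕ) gp) (r (j : ℕ)) ∩ (B : Set (Fin n → ℂ))).Nonempty} :=
      (isClosed_inter_nonempty isClosed_closedBall).measurableSet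
    by_cases hgp : gp ∈ v j
    · simp only [hgp, iff_true]
      exact hK hmeas
    · simp only [hgp, iff_false]
      exact (hK hmeas).compl
  refine measurable_of_countable_factor hrange hfib fun ω ω' h => ?_
  have hnest : nestSet m ((K ω : Set (Fin n → ℂ))) = nestSet m ((K ω' : Set (Fin n → ℂ))) := by
    unfold nestSet approxSet
    refine Set.iInter₂_congr fun j hj => ?_
    have : gridSet j ((K ω : Set (Fin n → ℂ))) = gridSet j ((K ω' : Set (Fin n → ℂ))) :=
      congrFun h ⟨j, Finset.mem_range.1 hj⟩
    rw [this]
  have hKm : KmNC m (K ω) = KmNC m (K ω') := NonemptyCompacts.ext hnest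
  rw [hKm]

end RHullAux

/-- Theorem `R-hull measurable` of the paper. Let `(Ω, 𝒜)` be a
measurable space and `K : Ω → 𝒦′(ℂⁿ)` a random compact set. Then the rationally convex
hull of `K` is a random compact set: there is a measurable `H : Ω → 𝒦′(ℂⁿ)` with `H ω`
equal, as a set, to the rationally convex hull
`R-hull (K ω) = { z : |p z| ≤ |q z| ⬝ sup_{x ∈ K ω} |p x / q x| for all polynomials p, q
with q nonvanishing on K ω }` for every `ω`. -/
theorem rationalHull_random_compact
    {Ω : Type*} [MeasurableSpace Ω] {n : ℕ}
    [MeasurableSpace (NonemptyCompacts (Fin n → ℂ))]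
    [BorelSpace (NonemptyCompacts (Fin n → ℂ))]
    (K : Ω → NonemptyCompacts (Fin n → ℂ)) (hK : Measurable K) :
    ∃ H : Ω → NonemptyCompacts (Fin n → ℂ), Measurable H ∧
      ∀ ω : Ω, (H ω : Set (Fin n → ℂ)) =
        {z : Fin n → ℂ | ∀ p q : MvPolynomial (Fin n) ℂ,
          (∀ x ∈ (K ω : Set (Fin n → ℂ)), eval x q ≠ 0) →
          ‖eval z p‖ ≤ ‖eval z q‖ *
            ⨆ x : (K ω : Set (Fin n → ℂ)), ‖eval (x : Fin n → ℂ) p / eval (x : Fin n → ℂ) q‖} := by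
  refine ⟨fun ω => RHullAux.hullNC (K ω), ?_, fun ω => rfl⟩
  exact measurable_of_tendsto_metrizable' Filter.atTop
    (fun m => RHullAux.measurable_hull_approx m hK)
    (tendsto_pi_nhds.2 fun ω => RHullAux.tendsto_hullNC_KmNC (K ω))
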